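/- Under Assumptions 1 and 3, let C = ∪_{k=0}^{ℓ} ( supp(x_k*(S)) ∪ Z_k(S) ). Then the regularized cascade applied to C reproduces the cascade applied to S: x_k*(C) = x_k*(S) and Z_k(C) = Z_k(S) for all k ∈ {0,…,ℓ}. -/
import Mathlib


open scoped Classical

noncomputable section

/-- The cost functional `c ⬝ x`. -/
def dotp {d : ℕ} (c x : Fin d → ℝ) : ℝ := ∑ i, c i * x i

/-- The support scenarios of the scenario program over `T`. -/
def suppSet {Δ : Type*} {d : ℕ} (z : Finset Δ → Fin d → ℝ) (T : Finset Δ) : Finset Δ :=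
  T.filter fun δ => z (T.erase δ) ≠ z T

/-- The regularization set `Z(T)`: the `d - |supp(T)|` smallest-labelled scenarios of
`T \ supp(T)` (labels given by the linear order on `Δ`). -/
def zedSet {Δ : Type*} [LinearOrder Δ] {d : ℕ} (z : Finset Δ → Fin d → ℝ)
    (T : Finset Δ) : Finset Δ :=
  (((T \ suppSet z T).sort (· ≤ ·)).take (d - (suppSet z T).card)).toFinset

/-- The regularized cascade discarding scheme: at each stage remove
`R_k = supp(T_k) ∪ Z_k(T_k)`. -/
def rstage {Δ : Type*} [LinearOrder Δ] {d : ℕ} (z : Finset Δ → Fin d → ℝ)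
    (T : Finset Δ) : ℕ → Finset Δ
  | 0 => T
  | k + 1 => rstage z T k \ (suppSet z (rstage z T k) ∪ zedSet z (rstage z T k))

section Aux

variable {Δ : Type*} {d : ℕ}

lemma supp_subset' (z : Finset Δ → Fin d → ℝ) (T : Finset Δ) : suppSet z T ⊆ T :=
  Finset.filter_subset _ _

lemma zed_subset' [LinearOrder Δ] (z : Finset Δ → Fin d → ℝ) (T : Finset Δ) :
    zedSet z T ⊆ T \ suppSet z T := by
  intro a ha
  simp only [zedSet, List.mem_toFinset] at ha
  have := List.take_subset _ _ ha
  rwa [Finset.mem_sort] at this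

/-- Properties of a sorted-take prefix: it's a subset, has cardinality `min m card`,
and all its elements are below all other elements. -/
lemma take_sort_spec [LinearOrder Δ] (m : ℕ) (A : Finset Δ) :
    ((A.sort (· ≤ ·)).take m).toFinset ⊆ A ∧
    ((A.sort (· ≤ ·)).take m).toFinset.card = min m A.card ∧
    ∀ a ∈ ((A.sort (· ≤ ·)).take m).toFinset, ∀ b ∈ A,
      b ∉ ((A.sort (· ≤ ·)).take m).toFinset → a ≤ b := by
  have hnodup : ((A.sort (· ≤ ·)).take m).Nodup :=
    (A.sort_nodup (· ≤ ·)).sublist (List.take_sublist _ _)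
  refine ⟨?_, ?_, ?_⟩
  · intro a ha
    simp only [List.mem_toFinset] at ha
    have := List.take_subset _ _ ha
    rwa [Finset.mem_sort] at this
  · rw [List.toFinset_card_of_nodup hnodup, List.length_take, Finset.length_sort]
  · intro a ha b hb hbn
    simp only [List.mem_toFinset] at ha hbn
    have hbl : b ∈ A.sort (· ≤ ·) := (Finset.mem_sort _).mpr hb
    have hbd : b ∈ (A.sort (· ≤ ·)).drop m := by
      rcases (List.mem_append.mp (by
        rwa [List.take_append_drop m (A.sort (· ≤ ·))] : b ∈ (A.sort (· ≤ ·)).take m ++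
          (A.sort (· ≤ ·)).drop m)) with h | h
      · exact absurd h hbn
      · exact h
    have hpw : ((A.sort (· ≤ ·)).take m ++ (A.sort (· ≤ ·)).drop m).Pairwise (· ≤ ·) := by
      rw [List.take_append_drop m (A.sort (· ≤ ·))]
      exact A.pairwise_sort (· ≤ ·)
    exact (List.pairwise_append.mp hpw).2.2 a ha b hbd

/-- Uniqueness: any set with the three properties equals the sorted-take prefix. -/
lemma take_sort_eq_of_spec [LinearOrder Δ] (m : ℕ) (A Z : Finset Δ)
    (hZA : Z ⊆ A) (hcard : Z.card = min m A.card)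
    (hle : ∀ a ∈ Z, ∀ b ∈ A, b ∉ Z → a ≤ b) :
    ((A.sort (· ≤ ·)).take m).toFinset = Z := by
  obtain ⟨hWA, hWcard, hWle⟩ := take_sort_spec (Δ := Δ) m A
  set W := ((A.sort (· ≤ ·)).take m).toFinset with hW
  by_contra hne
  have hWZ : ¬ W ⊆ Z := by
    intro h
    exact hne (Finset.eq_of_subset_of_card_le h (by omega))
  have hZW : ¬ Z ⊆ W := by
    intro h
    exact hne (Finset.eq_of_subset_of_card_le h (by omega)).symm
  obtain ⟨a, haW, haZ⟩ := Finset.not_subset.mp hWZ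
  obtain ⟨b, hbZ, hbW⟩ := Finset.not_subset.mp hZW
  have h1 : a ≤ b := hWle a haW b (hZA hbZ) hbW
  have h2 : b ≤ a := hle b hbZ a (hWA haW) haZ
  have : a = b := le_antisymm h1 h2
  exact haZ (this ▸ hbZ)

/-- If `A ⊆ B` and the `m`-prefix of `B` lies inside `A`, then the prefixes agree. -/
lemma take_sort_subset_eq [LinearOrder Δ] (m : ℕ) (A B : Finset Δ) (hAB : A ⊆ B)
    (h : ((B.sort (· ≤ ·)).take m).toFinset ⊆ A) :
    ((A.sort (· ≤ ·)).take m).toFinset = ((B.sort (· ≤ ·)).take m).toFinset := by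
  obtain ⟨hWB, hWcard, hWle⟩ := take_sort_spec (Δ := Δ) m B
  apply take_sort_eq_of_spec
  · exact h
  · have h1 : min m B.card ≤ A.card := hWcard ▸ Finset.card_le_card h
    have h2 : A.card ≤ B.card := Finset.card_le_card hAB
    omega
  · intro a ha b hb hbn
    exact hWle a ha b (hAB hb) hbn

variable {X : Set (Fin d → ℝ)} {c : Fin d → ℝ} {g : (Fin d → ℝ) → Δ → ℝ}
  {z : Finset Δ → Fin d → ℝ}

/-- Monotonicity of the optimal value in the scenario set. -/
lemma z_mono
    (hz : ∀ I : Finset Δ, z I ∈ X ∧ (∀ δ ∈ I, g (z I) δ ≤ 0) ∧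
      ∀ y ∈ X, (∀ δ ∈ I, g y δ ≤ 0) → y ≠ z I → dotp c (z I) < dotp c y)
    {I J : Finset Δ} (hIJ : I ⊆ J) : dotp c (z I) ≤ dotp c (z J) := by
  by_cases h : z J = z I
  · rw [h]
  · exact le_of_lt ((hz I).2.2 (z J) (hz J).1 (fun δ hδ => (hz J).2.1 δ (hIJ hδ)) h)

/-- Sandwich lemma: if `supp(T) ⊆ U ⊆ T` and `z(supp T) = z T`, then `z U = z T`. -/
lemma z_sandwich
    (hz : ∀ I : Finset Δ, z I ∈ X ∧ (∀ δ ∈ I, g (z I) δ ≤ 0) ∧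
      ∀ y ∈ X, (∀ δ ∈ I, g y δ ≤ 0) → y ≠ z I → dotp c (z I) < dotp c y)
    {T U : Finset Δ} (hsupp : suppSet z T ⊆ U) (hUT : U ⊆ T)
    (hnd : z (suppSet z T) = z T) : z U = z T := by
  by_contra hne
  have h1 : dotp c (z U) < dotp c (z T) :=
    (hz U).2.2 (z T) (hz T).1 (fun δ hδ => (hz T).2.1 δ (hUT hδ)) (fun h => hne h.symm)
  have h2 : dotp c (z (suppSet z T)) < dotp c (z U) :=
    (hz (suppSet z T)).2.2 (z U) (hz U).1 (fun δ hδ => (hz U).2.1 δ (hsupp hδ))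
      (by rw [hnd]; exact fun h => hne h)
  rw [hnd] at h2
  linarith

/-- Sandwich lemma for supports. -/
lemma supp_sandwich
    (hz : ∀ I : Finset Δ, z I ∈ X ∧ (∀ δ ∈ I, g (z I) δ ≤ 0) ∧
      ∀ y ∈ X, (∀ δ ∈ I, g y δ ≤ 0) → y ≠ z I → dotp c (z I) < dotp c y)
    {T U : Finset Δ} (hsupp : suppSet z T ⊆ U) (hUT : U ⊆ T)
    (hnd : z (suppSet z T) = z T) : suppSet z U = suppSet z T := by
  have hzU : z U = z T := z_sandwich hz hsupp hUT hnd
  ext δ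
  simp only [suppSet, Finset.mem_filter]
  constructor
  · rintro ⟨hδU, hne⟩
    refine ⟨hUT hδU, ?_⟩
    intro heq
    apply hne
    have hδs : δ ∉ suppSet z T := by
      simp only [suppSet, Finset.mem_filter, not_and, not_not]
      intro _; exact heq
    have hsub : suppSet z T ⊆ U.erase δ := fun x hx =>
      Finset.mem_erase.mpr ⟨fun h => hδs (h ▸ hx), hsupp hx⟩
    rw [z_sandwich hz hsub ((Finset.erase_subset _ _).trans hUT) hnd, hzU]
  · rintro ⟨hδT, hne⟩
    refine ⟨hsupp (Finset.mem_filter.mpr ⟨hδT, hne⟩), ?_⟩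
    intro heq
    apply hne
    by_cases hc : z (T.erase δ) = z (U.erase δ)
    · rw [hc, heq, hzU]
    · exfalso
      have h1 : dotp c (z (U.erase δ)) < dotp c (z (T.erase δ)) :=
        (hz (U.erase δ)).2.2 (z (T.erase δ)) (hz _).1
          (fun x hx => (hz _).2.1 x (Finset.erase_subset_erase δ hUT hx)) hc
      have h2 : dotp c (z (T.erase δ)) ≤ dotp c (z T) :=
        z_mono hz (Finset.erase_subset _ _)
      rw [heq, hzU] at h1
      linarith

end Aux

/-- Proposition 2, item (i): under Assumptions 1 and 3, the regularized cascade applied to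
`C = ∪_{k=0}^{ℓ} (supp(x_k*(S)) ∪ Z_k(S))` reproduces the cascade applied to `S`:
`x_k*(C) = x_k*(S)` and `Z_k(C) = Z_k(S)` for all `k ∈ {0,…,ℓ}`. -/
theorem stmt8 {Δ : Type*} [LinearOrder Δ]
    (d : ℕ) (X : Set (Fin d → ℝ)) (hXclosed : IsClosed X) (hXconvex : Convex ℝ X)
    (c : Fin d → ℝ) (g : (Fin d → ℝ) → Δ → ℝ)
    (hgconvex : ∀ δ : Δ, ConvexOn ℝ Set.univ fun x => g x δ)
    -- Assumption 1: `z I` is the unique minimizer of the scenario program over `I`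
    (z : Finset Δ → Fin d → ℝ)
    (hz : ∀ I : Finset Δ, z I ∈ X ∧ (∀ δ ∈ I, g (z I) δ ≤ 0) ∧
      ∀ y ∈ X, (∀ δ ∈ I, g y δ ≤ 0) → y ≠ z I → dotp c (z I) < dotp c y)
    (ℓ : ℕ) (S : Finset Δ) (hS : S.card > (ℓ + 1) * d)
    -- Assumption 3: non-degeneracy of every stage of the cascade applied to `S`
    -- and to its subsets
    (hnondeg : ∀ T : Finset Δ, T ⊆ S → ∀ k ≤ ℓ,
      z (suppSet z (rstage z T k)) = z (rstage z T k))
    (C : Finset Δ)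
    (hC : C = (Finset.range (ℓ + 1)).biUnion fun k =>
      suppSet z (rstage z S k) ∪ zedSet z (rstage z S k)) :
    ∀ k ≤ ℓ, z (rstage z C k) = z (rstage z S k) ∧
      zedSet z (rstage z C k) = zedSet z (rstage z S k) := by
  have hnd : ∀ k ≤ ℓ, z (suppSet z (rstage z S k)) = z (rstage z S k) :=
    fun k hk => hnondeg S (subset_refl S) k hk
  set R : ℕ → Finset Δ := fun k => suppSet z (rstage z S k) ∪ zedSet z (rstage z S k) with hR
  have hRsub : ∀ k, R k ⊆ rstage z S k := fun k =>
    Finset.union_subset (supp_subset' z _) ((zed_subset' z _).trans Finset.sdiff_subset)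
  have hstep : ∀ k, rstage z S (k + 1) = rstage z S k \ R k := fun k => rfl
  have hmono : ∀ i j, i ≤ j → rstage z S j ⊆ rstage z S i := by
    intro i j hij
    induction j with
    | zero => rw [Nat.le_zero.mp hij]
    | succ j ih =>
      rcases Nat.lt_or_ge i (j + 1) with h | h
      · refine subset_trans ?_ (ih (Nat.lt_succ_iff.mp h))
        rw [hstep j]
        exact Finset.sdiff_subset
      · rw [Nat.le_antisymm hij h]
  -- consequences at stage k, given the set identity
  have hUfacts : ∀ k, k ≤ ℓ → rstage z C k = (Finset.Icc k ℓ).biUnion R →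
      z (rstage z C k) = z (rstage z S k) ∧
      suppSet z (rstage z C k) = suppSet z (rstage z S k) ∧
      zedSet z (rstage z C k) = zedSet z (rstage z S k) := by
    intro k hk hCk
    have hsub1 : suppSet z (rstage z S k) ⊆ rstage z C k := by
      rw [hCk]
      intro x hx
      exact Finset.mem_biUnion.mpr ⟨k, Finset.mem_Icc.mpr ⟨le_refl k, hk⟩,
        Finset.mem_union_left _ hx⟩
    have hsub2 : rstage z C k ⊆ rstage z S k := by
      rw [hCk]
      intro x hx
      obtain ⟨j, hj, hxj⟩ := Finset.mem_biUnion.mp hx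
      exact hmono k j (Finset.mem_Icc.mp hj).1 (hRsub j hxj)
    have h1 := z_sandwich hz hsub1 hsub2 (hnd k hk)
    have h2 := supp_sandwich hz hsub1 hsub2 (hnd k hk)
    refine ⟨h1, h2, ?_⟩
    show zedSet z (rstage z C k) = zedSet z (rstage z S k)
    unfold zedSet
    rw [h2]
    apply take_sort_subset_eq
    · exact Finset.sdiff_subset_sdiff hsub2 (subset_refl _)
    · intro b hb
      have hb' : b ∈ rstage z S k \ suppSet z (rstage z S k) := zed_subset' z _ hb
      refine Finset.mem_sdiff.mpr ⟨?_, (Finset.mem_sdiff.mp hb').2⟩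
      rw [hCk]
      exact Finset.mem_biUnion.mpr ⟨k, Finset.mem_Icc.mpr ⟨le_refl k, hk⟩,
        Finset.mem_union_right _ hb⟩
  -- the set identity, by induction
  have hset : ∀ k, k ≤ ℓ → rstage z C k = (Finset.Icc k ℓ).biUnion R := by
    intro k
    induction k with
    | zero =>
      intro _
      show C = _
      rw [hC, Finset.range_eq_Ico, ← Finset.Ico_add_one_right_eq_Icc]
    | succ k ih =>
      intro hk1
      have hk : k ≤ ℓ := Nat.le_of_succ_le hk1
      have hCk := ih hk
      obtain ⟨h1, h2, h3⟩ := hUfacts k hk hCk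
      show rstage z C k \ (suppSet z (rstage z C k) ∪ zedSet z (rstage z C k)) = _
      rw [h2, h3, hCk]
      have hicc : Finset.Icc k ℓ = insert k (Finset.Icc (k + 1) ℓ) := by
        ext x
        simp only [Finset.mem_Icc, Finset.mem_insert]
        omega
      rw [hicc, Finset.biUnion_insert]
      have hdisj : ∀ x ∈ (Finset.Icc (k + 1) ℓ).biUnion R,
          ¬(x ∈ suppSet z (rstage z S k) ∨ x ∈ zedSet z (rstage z S k)) := by
        intro x hx h
        obtain ⟨j, hj, hxj⟩ := Finset.mem_biUnion.mp hx
        have hxk : x ∈ rstage z S (k + 1) :=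
          hmono (k + 1) j (Finset.mem_Icc.mp hj).1 (hRsub j hxj)
        rw [hstep k] at hxk
        exact (Finset.mem_sdiff.mp hxk).2 (Finset.mem_union.mpr h)
      ext x
      simp only [Finset.mem_sdiff, Finset.mem_union]
      constructor
      · rintro ⟨hxk | hxb, hnk⟩
        · simp only [hR, Finset.mem_union] at hxk
          exact absurd hxk hnk
        · exact hxb
      · intro hxb
        exact ⟨Or.inr hxb, hdisj x hxb⟩
  intro k hk
  obtain ⟨h1, _, h3⟩ := hUfacts k hk (hset k hk)
  exact ⟨h1, h3⟩
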